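/- Let Y ≥ 1 be an integer and let g be a multiplicative function with |g(p)| ≤ 1 for all primes p and g(p^α) = 0 for α ≥ 2, and let χ₁, …, χ_Y be completely multiplicative functions with |χⱼ(p)| ≤ 1, such that g(p) = (1/Y)Σⱼ χⱼ(p). Then for real s = σ with 1/2 < σ ≤ 1, the Euler product ω(σ) = ∏_p [(1 + g(p)/p^σ)^Y ∏ⱼ (1 − χⱼ(p)/p^σ)] converges and satisfies ζ(2σ)^{−2Y} ≤ |ω(σ)| ≤ ζ(2σ)^{2Y}. -/

import Mathlib

open Complex Real

private lemma log_aux {z : ℂ} {x : ℝ} (hzx : ‖z‖ ≤ x) (hx : x < 1) :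
    ‖Complex.log (1 + z) - z‖ ≤ -Real.log (1 - x) - x := by
  have hx0 : 0 ≤ x := le_trans (norm_nonneg z) hzx
  have hz : ‖-z‖ < 1 := by rw [norm_neg]; exact lt_of_le_of_lt hzx hx
  have h1 : HasSum (fun n : ℕ => (-z) ^ n / n) (-Complex.log (1 - -z)) :=
    Complex.hasSum_taylorSeries_neg_log hz
  rw [sub_neg_eq_add] at h1
  have h2 : HasSum (fun n : ℕ => (-z) ^ (n + 2) / ((n : ℂ) + 2))
      (-Complex.log (1 + z) + z) := by
    have := (hasSum_nat_add_iff' (f := fun n : ℕ => (-z) ^ n / n) 2).mpr h1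
    have hsum0 : (∑ i ∈ Finset.range 2, (-z) ^ i / (i : ℂ)) = -z := by
      simp [Finset.sum_range_succ]
    rw [hsum0, sub_neg_eq_add] at this
    convert this using 2 with n
    · rfl
    push_cast
    ring
  have hax : |x| < 1 := by rwa [_root_.abs_of_nonneg hx0]
  have hr1 : HasSum (fun n : ℕ => x ^ (n + 1) / (n + 1)) (-Real.log (1 - x)) :=
    Real.hasSum_pow_div_log_of_abs_lt_one hax
  have hr2 : HasSum (fun n : ℕ => x ^ (n + 2) / ((n : ℝ) + 2))
      (-Real.log (1 - x) - x) := by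
    have := (hasSum_nat_add_iff' (f := fun n : ℕ => x ^ (n + 1) / (n + 1)) 1).mpr hr1
    have hsum0 : (∑ i ∈ Finset.range 1, x ^ (i + 1) / ((i : ℝ) + 1)) = x := by simp
    rw [hsum0] at this
    convert this using 2 with n
    · rfl
    push_cast
    ring
  have hb : ∀ n : ℕ, ‖(-z) ^ (n + 2) / ((n : ℂ) + 2)‖ ≤ x ^ (n + 2) / ((n : ℝ) + 2) := by
    intro n
    rw [norm_div, norm_pow, norm_neg]
    have h2n : ‖((n : ℂ) + 2)‖ = (n : ℝ) + 2 := by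
      rw [show ((n : ℂ) + 2) = (((n : ℝ) + 2 : ℝ) : ℂ) by push_cast; ring,
        Complex.norm_real, Real.norm_of_nonneg (by positivity)]
    rw [h2n]
    gcongr
  have hsummable : Summable (fun n : ℕ => ‖(-z) ^ (n + 2) / ((n : ℂ) + 2)‖) :=
    Summable.of_nonneg_of_le (fun n => norm_nonneg _) hb hr2.summable
  have : ‖-Complex.log (1 + z) + z‖ ≤ -Real.log (1 - x) - x := by
    rw [← h2.tsum_eq]
    calc ‖∑' n : ℕ, (-z) ^ (n + 2) / ((n : ℂ) + 2)‖
        ≤ ∑' n : ℕ, ‖(-z) ^ (n + 2) / ((n : ℂ) + 2)‖ := norm_tsum_le_tsum_norm hsummable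
      _ ≤ ∑' n : ℕ, x ^ (n + 2) / ((n : ℝ) + 2) := Summable.tsum_le_tsum hb hsummable hr2.summable
      _ = -Real.log (1 - x) - x := hr2.tsum_eq
  calc ‖Complex.log (1 + z) - z‖ = ‖-Complex.log (1 + z) + z‖ := by
        rw [← norm_neg]; ring_nf
    _ ≤ -Real.log (1 - x) - x := this

private lemma log_aux2 {z : ℂ} {x : ℝ} (hzx : ‖z‖ ≤ x) (hx : x < 1) :
    ‖Complex.log (1 + z) - z‖ ≤ -Real.log (1 - x ^ 2) := by
  have hx0 : 0 ≤ x := le_trans (norm_nonneg z) hzx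
  refine (log_aux hzx hx).trans ?_
  have h1 : (0 : ℝ) < 1 - x := by linarith
  have h2 : (0 : ℝ) < 1 + x := by linarith
  rw [show (1 - x ^ 2 : ℝ) = (1 - x) * (1 + x) by ring, Real.log_mul h1.ne' h2.ne']
  have h3 : Real.log (1 + x) ≤ (1 + x) - 1 := Real.log_le_sub_one_of_pos h2
  linarith


/-- bounds `ζ(2σ)^{-2Y} ≤ |ω(σ)| ≤ ζ(2σ)^{2Y}` for the Euler
product `ω(σ) = ∏_p (1 + g(p)/p^σ)^Y ∏_j (1 − χ_j(p)/p^σ)`, where `g` is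
multiplicative with `|g(p)| ≤ 1`, vanishing on higher prime powers, the `χ_j`
are completely multiplicative with `|χ_j(p)| ≤ 1`, and
`g(p) = (1/Y) ∑_j χ_j(p)`.  Here `ζ(2σ) = ∑_n n^{-2σ}`. -/
theorem stmt19 (Y : ℕ) (hY : 1 ≤ Y)
    (g : ArithmeticFunction ℂ) (hg : g.IsMultiplicative)
    (hg1 : ∀ p : ℕ, p.Prime → ‖(g p)‖ ≤ 1)
    (hgpow : ∀ (p α : ℕ), p.Prime → 2 ≤ α → g (p ^ α) = 0)
    (χ : Fin Y → ℕ → ℂ)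
    (hχ1 : ∀ j, χ j 1 = 1)
    (hχm : ∀ j, ∀ m n : ℕ, χ j (m * n) = χ j m * χ j n)
    (hχb : ∀ j, ∀ p : ℕ, p.Prime → ‖(χ j p)‖ ≤ 1)
    (havg : ∀ p : ℕ, p.Prime → g p = (1 / (Y : ℂ)) * ∑ j, χ j p)
    (σ : ℝ) (hσ : 1/2 < σ) (hσ1 : σ ≤ 1) :
    Multipliable (fun p : Nat.Primes =>
      (1 + g p / (p : ℂ) ^ (σ : ℂ)) ^ Y *
        ∏ j, (1 - χ j p / (p : ℂ) ^ (σ : ℂ))) ∧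
    ((∑' n : ℕ, 1 / (n : ℝ) ^ (2 * σ)) ^ (2 * Y))⁻¹ ≤
        ‖(∏' p : Nat.Primes,
          (1 + g p / (p : ℂ) ^ (σ : ℂ)) ^ Y *
            ∏ j, (1 - χ j p / (p : ℂ) ^ (σ : ℂ)))‖ ∧
      ‖(∏' p : Nat.Primes,
          (1 + g p / (p : ℂ) ^ (σ : ℂ)) ^ Y *
            ∏ j, (1 - χ j p / (p : ℂ) ^ (σ : ℂ)))‖ ≤
        (∑' n : ℕ, 1 / (n : ℝ) ^ (2 * σ)) ^ (2 * Y) := by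
  classical
  have hσ0 : 0 < σ := by linarith
  have h2σ : 1 < 2 * σ := by linarith
  -- notation
  set x : Nat.Primes → ℝ := fun p => (((p : ℕ) : ℝ) ^ σ)⁻¹ with hxdef
  have hp2 : ∀ p : Nat.Primes, (2 : ℝ) ≤ ((p : ℕ) : ℝ) := fun p => by
    exact_mod_cast p.prop.two_le
  have hppos : ∀ p : Nat.Primes, (0 : ℝ) < ((p : ℕ) : ℝ) := fun p => by linarith [hp2 p]
  have hrppos : ∀ p : Nat.Primes, (0 : ℝ) < ((p : ℕ) : ℝ) ^ σ := fun p =>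
    Real.rpow_pos_of_pos (hppos p) σ
  have hxpos : ∀ p, 0 < x p := fun p => by
    simp only [hxdef]; exact inv_pos.mpr (hrppos p)
  have hx1 : ∀ p, x p < 1 := fun p => by
    simp only [hxdef]
    rw [inv_lt_one_iff₀]
    right
    exact Real.one_lt_rpow_iff_of_pos (hppos p) |>.mpr (Or.inl ⟨by linarith [hp2 p], hσ0⟩)
  have hxsq : ∀ p, x p ^ 2 = (((p : ℕ) : ℝ) ^ (2 * σ))⁻¹ := fun p => by
    simp only [hxdef]
    rw [inv_pow]
    congr 1
    rw [← Real.rpow_natCast ((((p : ℕ) : ℝ)) ^ σ) 2, ← Real.rpow_mul (hppos p).le]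
    norm_num [mul_comm]
  have hxsq_lt1 : ∀ p, x p ^ 2 < 1 := fun p => by
    have := hxpos p; have := hx1 p; nlinarith
  have hxsq_half : ∀ p, x p ^ 2 ≤ 1 / 2 := fun p => by
    rw [hxsq p]
    rw [inv_le_comm₀ (Real.rpow_pos_of_pos (hppos p) _) (by norm_num)]
    calc ((1 : ℝ) / 2)⁻¹ = (2 : ℝ) ^ (1 : ℝ) := by norm_num
      _ ≤ (2 : ℝ) ^ (2 * σ) := by
          apply Real.rpow_le_rpow_of_exponent_le (by norm_num) (by linarith)
      _ ≤ ((p : ℕ) : ℝ) ^ (2 * σ) := by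
          apply Real.rpow_le_rpow (by norm_num) (hp2 p) (by linarith)
  -- rewrite cpow
  have hcast : ∀ p : Nat.Primes, ((p : ℂ) ^ (σ : ℂ))⁻¹ = ((x p : ℝ) : ℂ) := fun p => by
    have h1 : ((p : ℂ)) = (((p : ℕ) : ℝ) : ℂ) := by push_cast; rfl
    simp only [hxdef]
    rw [h1, ← Complex.ofReal_cpow (hppos p).le, ← Complex.ofReal_inv]
  -- a and b
  set a : Nat.Primes → ℂ := fun p => g p * ((x p : ℝ) : ℂ) with hadef
  set b : Nat.Primes → Fin Y → ℂ := fun p j => χ j p * ((x p : ℝ) : ℂ) with hbdef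
  have hna : ∀ p, ‖a p‖ ≤ x p := fun p => by
    simp only [hadef, norm_mul, Complex.norm_real, Real.norm_of_nonneg (hxpos p).le]
    calc ‖g p‖ * x p ≤ 1 * x p := by
          apply mul_le_mul_of_nonneg_right _ (hxpos p).le
          exact hg1 p p.prop
      _ = x p := one_mul _
  have hnb : ∀ p j, ‖b p j‖ ≤ x p := fun p j => by
    simp only [hbdef, norm_mul, Complex.norm_real, Real.norm_of_nonneg (hxpos p).le]
    calc ‖χ j p‖ * x p ≤ 1 * x p := by
          apply mul_le_mul_of_nonneg_right _ (hxpos p).le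
          exact hχb j p p.prop
      _ = x p := one_mul _
  -- L and r
  set L : Nat.Primes → ℂ := fun p =>
    (Y : ℂ) * (Complex.log (1 + a p) - a p) +
      ∑ j, (Complex.log (1 - b p j) + b p j) with hLdef
  set r : Nat.Primes → ℝ := fun p => -Real.log (1 - x p ^ 2) with hrdef
  have hr0 : ∀ p, 0 ≤ r p := fun p => by
    simp only [hrdef]
    rw [neg_nonneg]
    apply Real.log_nonpos
    · nlinarith [hxsq_lt1 p, hxpos p]
    · nlinarith [hxpos p]
  have hL : ∀ p, ‖L p‖ ≤ 2 * Y * r p := by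
    intro p
    have h1 : ‖Complex.log (1 + a p) - a p‖ ≤ r p := by
      simpa only [hrdef] using log_aux2 (hna p) (hx1 p)
    have h2 : ∀ j, ‖Complex.log (1 - b p j) + b p j‖ ≤ r p := by
      intro j
      have : (1 : ℂ) - b p j = 1 + (-(b p j)) := by ring
      rw [this, show Complex.log (1 + -b p j) + b p j
            = Complex.log (1 + -b p j) - (-(b p j)) by ring]
      simpa only [hrdef] using log_aux2 (x := x p) (by rw [norm_neg]; exact hnb p j) (hx1 p)
    calc ‖L p‖ ≤ ‖(Y : ℂ) * (Complex.log (1 + a p) - a p)‖ +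
          ‖∑ j, (Complex.log (1 - b p j) + b p j)‖ := norm_add_le _ _
      _ ≤ (Y : ℝ) * r p + (Y : ℝ) * r p := by
          apply add_le_add
          · rw [norm_mul, Complex.norm_natCast]
            exact mul_le_mul_of_nonneg_left h1 (Nat.cast_nonneg Y)
          · calc ‖∑ j, (Complex.log (1 - b p j) + b p j)‖
                ≤ ∑ j, ‖Complex.log (1 - b p j) + b p j‖ := norm_sum_le _ _
              _ ≤ ∑ _j : Fin Y, r p := Finset.sum_le_sum (fun j _ => h2 j)
              _ = (Y : ℝ) * r p := by simp [mul_comm]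
      _ = 2 * Y * r p := by ring
  -- summability
  have hsump : Summable (fun p : Nat.Primes => (((p : ℕ) : ℝ) ^ (2 * σ))⁻¹) := by
    have h := Real.summable_nat_rpow_inv.mpr h2σ
    exact h.comp_injective (fun p q h => Subtype.ext h)
  have hrs : Summable r := by
    apply Summable.of_nonneg_of_le hr0 (fun p => ?_) (hsump.mul_left 2)
    have ht0 : 0 ≤ x p ^ 2 := sq_nonneg _
    have ht : x p ^ 2 ≤ 1 / 2 := hxsq_half p
    have h1t : (0 : ℝ) < 1 - x p ^ 2 := by linarith
    have hlog : Real.log ((1 - x p ^ 2)⁻¹) ≤ (1 - x p ^ 2)⁻¹ - 1 :=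
      Real.log_le_sub_one_of_pos (inv_pos.mpr h1t)
    rw [Real.log_inv] at hlog
    have hinv : (1 - x p ^ 2)⁻¹ ≤ 1 + 2 * x p ^ 2 := by
      rw [inv_le_iff_one_le_mul₀ h1t]
      nlinarith
    simp only [hrdef]
    rw [← hxsq p]
    linarith
  have hLnorm_sum : Summable (fun p => ‖L p‖) :=
    Summable.of_nonneg_of_le (fun p => norm_nonneg _) hL (hrs.mul_left (2 * (Y : ℝ)))
  have hLs : Summable L := Summable.of_norm hLnorm_sum
  -- F = cexp ∘ L
  have hne1 : ∀ p : Nat.Primes, (1 : ℂ) + a p ≠ 0 := by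
    intro p h
    have : ‖a p‖ = 1 := by
      rw [show a p = -1 by linear_combination h]; simp
    linarith [hna p, hx1 p]
  have hne2 : ∀ (p : Nat.Primes) (j : Fin Y), (1 : ℂ) - b p j ≠ 0 := by
    intro p j h
    have : ‖b p j‖ = 1 := by
      rw [show b p j = 1 by linear_combination -h]; simp
    linarith [hnb p j, hx1 p]
  have hYne : (Y : ℂ) ≠ 0 := Nat.cast_ne_zero.mpr (by omega)
  have hFeq : (fun p : Nat.Primes =>
      (1 + g p / (p : ℂ) ^ (σ : ℂ)) ^ Y *
        ∏ j, (1 - χ j p / (p : ℂ) ^ (σ : ℂ))) = fun p => Complex.exp (L p) := by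
    funext p
    have hdiv1 : g p / (p : ℂ) ^ (σ : ℂ) = a p := by
      rw [div_eq_mul_inv, hcast p]
    have hdiv2 : ∀ j : Fin Y, χ j p / (p : ℂ) ^ (σ : ℂ) = b p j := fun j => by
      rw [div_eq_mul_inv, hcast p]
    rw [hdiv1]
    simp only [hdiv2]
    have hYa : (Y : ℂ) * a p = ∑ j, b p j := by
      simp only [hadef, hbdef, ← Finset.sum_mul, ← mul_assoc]
      congr 1
      rw [havg p p.prop]
      field_simp
    have hLp : L p = (Y : ℂ) * Complex.log (1 + a p) + ∑ j, Complex.log (1 - b p j) := by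
      simp only [hLdef, Finset.sum_add_distrib]
      rw [← hYa]
      ring
    rw [hLp, Complex.exp_add, Complex.exp_nat_mul, Complex.exp_sum]
    rw [Complex.exp_log (hne1 p)]
    congr 1
    exact Finset.prod_congr rfl (fun j _ => (Complex.exp_log (hne2 p j)).symm)
  have hprod : HasProd (fun p : Nat.Primes =>
      (1 + g p / (p : ℂ) ^ (σ : ℂ)) ^ Y *
        ∏ j, (1 - χ j p / (p : ℂ) ^ (σ : ℂ))) (Complex.exp (∑' p, L p)) := by
    rw [hFeq]
    exact hLs.hasSum.cexp
  have habs : |(∑' p, L p).re| ≤ 2 * (Y : ℝ) * ∑' p, r p := by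
    calc |(∑' p, L p).re| ≤ ‖∑' p, L p‖ := Complex.abs_re_le_norm _
      _ ≤ ∑' p, ‖L p‖ := norm_tsum_le_tsum_norm hLnorm_sum
      _ ≤ ∑' p, 2 * (Y : ℝ) * r p := Summable.tsum_le_tsum hL hLnorm_sum (hrs.mul_left _)
      _ = 2 * (Y : ℝ) * ∑' p, r p := tsum_mul_left
  have hexpS : Real.exp (∑' p, r p) = ∑' n : ℕ, 1 / (n : ℝ) ^ (2 * σ) := by
    have hf0 : (((0 : ℕ) : ℝ)) ^ (2 * σ) = 0 := by
      rw [Nat.cast_zero]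
      exact Real.zero_rpow (by positivity)
    set f : ℕ →*₀ ℝ :=
      { toFun := fun n => (((n : ℕ) : ℝ) ^ (2 * σ))⁻¹
        map_zero' := by
          show ((((0 : ℕ) : ℝ)) ^ (2 * σ))⁻¹ = 0
          rw [hf0, inv_zero]
        map_one' := by norm_num
        map_mul' := fun m n => by
          push_cast
          rw [Real.mul_rpow (Nat.cast_nonneg m) (Nat.cast_nonneg n), mul_inv] } with hfdef
    have hfsum : Summable (fun n => ‖f n‖) := by
      have h : (fun n : ℕ => ‖f n‖) = fun n : ℕ => (((n : ℕ) : ℝ) ^ (2 * σ))⁻¹ := by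
        funext n
        show ‖(((n : ℕ) : ℝ) ^ (2 * σ))⁻¹‖ = (((n : ℕ) : ℝ) ^ (2 * σ))⁻¹
        exact Real.norm_of_nonneg (by positivity)
      rw [h]
      exact Real.summable_nat_rpow_inv.mpr h2σ
    have hEP := EulerProduct.eulerProduct_completely_multiplicative_hasProd hfsum
    have hR : HasProd (fun p : Nat.Primes => (1 - f (p : ℕ))⁻¹) (Real.exp (∑' p, r p)) := by
      have h1 := hrs.hasSum.rexp
      have h2 : (Real.exp ∘ r) = fun p : Nat.Primes => (1 - f (p : ℕ))⁻¹ := by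
        funext p
        have h3 : (0 : ℝ) < 1 - x p ^ 2 := by nlinarith [hxsq_lt1 p]
        have hfp : f (p : ℕ) = (((p : ℕ) : ℝ) ^ (2 * σ))⁻¹ := rfl
        simp only [Function.comp, hrdef, Real.exp_neg, hfp, hxsq p]
        rw [Real.exp_log (by rwa [← hxsq p] : (0 : ℝ) < 1 - (((p : ℕ) : ℝ) ^ (2 * σ))⁻¹)]
      rwa [h2] at h1
    rw [hR.unique hEP]
    exact tsum_congr fun n => (one_div _).symm
  refine ⟨hprod.multipliable, ?_, ?_⟩ <;>
    rw [hprod.tprod_eq, Complex.norm_exp, ← hexpS, ← Real.exp_nat_mul]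
  · rw [← Real.exp_neg]
    apply Real.exp_le_exp.mpr
    push_cast
    linarith [neg_abs_le (∑' p, L p).re]
  · apply Real.exp_le_exp.mpr
    push_cast
    linarith [le_abs_self (∑' p, L p).re]
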